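/- If Z_0 and Z are independent centered Gaussians with variances γ₀² and γ² respectively, then E[(σ(Z_0) − σ(Z))·σ'(Z_0)·(μ(γ)·Z − μ(γ₀)·Z_0)] = −γ²·μ(γ)²·μ(γ₀) − μ(γ₀)·E[(σ(Z_0) − 1/2)·σ'(Z_0)·Z_0], where μ(b) = E[σ'(Z_b)] for Z_b ~ N(0,b²). -/

import Mathlib

open MeasureTheory ProbabilityTheory

noncomputable def sigmoid (x : ℝ) : ℝ := (1 + Real.exp (-x))⁻¹

noncomputable def sigmoid' (x : ℝ) : ℝ := sigmoid x * (1 - sigmoid x)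

/-- μ(b) = E[σ'(Z_b)] for Z_b ~ N(0, b²). -/
noncomputable def mu (b : NNReal) : ℝ := ∫ x, sigmoid' x ∂(gaussianReal 0 (b ^ 2))

section Aux

open Filter
open Real hiding sigmoid sigmoid_pos sigmoid_le_one sigmoid_neg hasDerivAt_sigmoid
open scoped NNReal ENNReal

lemma one_add_exp_pos (x : ℝ) : 0 < 1 + Real.exp (-x) := by positivity

lemma sigmoid_pos (x : ℝ) : 0 < sigmoid x := by
  unfold sigmoid; positivity

lemma sigmoid_le_one (x : ℝ) : sigmoid x ≤ 1 := by
  unfold sigmoid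
  rw [inv_le_one_iff₀]
  right
  nlinarith [Real.exp_pos (-x)]

lemma abs_sigmoid_le (x : ℝ) : |sigmoid x| ≤ 1 := by
  rw [abs_of_pos (sigmoid_pos x)]; exact sigmoid_le_one x

lemma abs_sigmoid'_le (x : ℝ) : |sigmoid' x| ≤ 1 := by
  have h1 := sigmoid_pos x
  have h2 := sigmoid_le_one x
  unfold sigmoid'
  rw [abs_le]
  constructor <;> nlinarith

lemma continuous_sigmoid_aux : Continuous sigmoid := by
  unfold sigmoid
  exact (continuous_const.add (Real.continuous_exp.comp continuous_neg)).inv₀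
    fun x => (one_add_exp_pos x).ne'

lemma continuous_sigmoid' : Continuous sigmoid' :=
  continuous_sigmoid_aux.mul (continuous_const.sub continuous_sigmoid_aux)

lemma one_sub_sigmoid (x : ℝ) : 1 - sigmoid x = Real.exp (-x) * sigmoid x := by
  unfold sigmoid
  have h := (one_add_exp_pos x).ne'
  field_simp
  ring

lemma hasDerivAt_sigmoid (x : ℝ) : HasDerivAt sigmoid (sigmoid' x) x := by
  have h1 : HasDerivAt (fun y : ℝ => 1 + Real.exp (-y)) (-Real.exp (-x)) x := by
    have := (Real.hasDerivAt_exp (-x)).comp x (hasDerivAt_neg x)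
    simpa using this.const_add 1
  have h2 := h1.inv (one_add_exp_pos x).ne'
  refine h2.congr_deriv ?_
  symm
  unfold sigmoid' sigmoid
  have h := (one_add_exp_pos x).ne'
  field_simp
  ring

-- representation of gaussian integral as volume integral
lemma gauss_integral_rep {v : ℝ≥0} (hv : v ≠ 0) (g : ℝ → ℝ) :
    ∫ x, g x ∂(gaussianReal 0 v) = ∫ x, gaussianPDFReal 0 v x * g x := by
  rw [gaussianReal_of_var_ne_zero _ hv]
  have hd : gaussianPDF 0 v = fun x => ((gaussianPDFReal 0 v x).toNNReal : ℝ≥0∞) := by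
    funext x; rfl
  rw [hd, integral_withDensity_eq_integral_smul
    ((measurable_gaussianPDFReal 0 v).real_toNNReal) g]
  congr 1
  funext x
  simp [NNReal.smul_def, Real.coe_toNNReal _ (gaussianPDFReal_nonneg 0 v x)]

lemma gauss_integrable_iff {v : ℝ≥0} (hv : v ≠ 0) (g : ℝ → ℝ) :
    Integrable g (gaussianReal 0 v) ↔
      Integrable (fun x => g x * gaussianPDFReal 0 v x) volume := by
  rw [gaussianReal_of_var_ne_zero _ hv]
  rw [integrable_withDensity_iff (measurable_gaussianPDF 0 v)
    (ae_of_all _ fun x => ENNReal.ofReal_lt_top)]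
  exact integrable_congr (ae_of_all _ fun x => by
    simp [gaussianPDF, ENNReal.toReal_ofReal (gaussianPDFReal_nonneg 0 v x)])

lemma gauss_map_neg (v : ℝ≥0) :
    (gaussianReal 0 v).map (fun x => -x) = gaussianReal 0 v := by
  have h := gaussianReal_map_const_mul (μ := 0) (v := v) (-1)
  have h1 : (fun x : ℝ => -1 * x) = fun x => -x := by funext x; ring
  have h2 : (⟨(-1 : ℝ) ^ 2, sq_nonneg _⟩ : ℝ≥0) = 1 := by ext; norm_num
  rw [h1] at h
  rw [h]
  congr 1
  · ring
  · ext; simp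

lemma gauss_integrable_of_bound (v : ℝ≥0) (g : ℝ → ℝ) (hg : Measurable g) (C : ℝ)
    (hb : ∀ x, |g x| ≤ C) : Integrable g (gaussianReal 0 v) :=
  (integrable_const C).mono' hg.aestronglyMeasurable
    (ae_of_all _ fun x => by simpa using hb x)

lemma gauss_integrable_id (v : ℝ≥0) : Integrable id (gaussianReal 0 v) := by
  by_cases hv : v = 0
  · rw [hv, gaussianReal_zero_var]
    exact (integrable_const (0:ℝ)).congr (ae_eq_dirac id).symm
  · rw [gauss_integrable_iff hv]
    have hv' : (0 : ℝ) < v := by positivity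
    have hb : (0 : ℝ) < (2 * (v:ℝ))⁻¹ := by positivity
    have h := ((integrable_mul_exp_neg_mul_sq hb).const_mul (√(2 * π * v))⁻¹)
    refine h.congr (ae_of_all _ fun x => ?_)
    simp only [gaussianPDFReal, id, sub_zero]
    rw [show -(x:ℝ)^2/(2*(v:ℝ)) = -((2*(v:ℝ))⁻¹ * x^2) by field_simp]
    ring
lemma sigmoid_neg (x : ℝ) : sigmoid (-x) = 1 - sigmoid x := by
  unfold sigmoid
  rw [neg_neg]
  have h1 := (one_add_exp_pos x).ne'
  have h2 : (1 : ℝ) + Real.exp x ≠ 0 := by positivity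
  rw [Real.exp_neg]
  have h3 := (Real.exp_pos x).ne'
  field_simp
  ring

lemma gauss_integral_comp_neg (v : ℝ≥0) (g : ℝ → ℝ) (hg : Measurable g) :
    ∫ x, g x ∂(gaussianReal 0 v) = ∫ x, g (-x) ∂(gaussianReal 0 v) := by
  conv_lhs => rw [← gauss_map_neg v]
  rw [integral_map measurable_neg.aemeasurable
    (by rw [gauss_map_neg]; exact hg.aestronglyMeasurable)]

lemma gauss_integral_id (v : ℝ≥0) : ∫ x, x ∂(gaussianReal 0 v) = 0 := by
  have h := gauss_integral_comp_neg v id measurable_id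
  simp only [id] at h
  rw [integral_neg] at h
  linarith

lemma gauss_integral_sigmoid (v : ℝ≥0) : ∫ x, sigmoid x ∂(gaussianReal 0 v) = 1/2 := by
  have hσ : Integrable sigmoid (gaussianReal 0 v) :=
    gauss_integrable_of_bound v _ continuous_sigmoid_aux.measurable 1 abs_sigmoid_le
  have h := gauss_integral_comp_neg v sigmoid continuous_sigmoid_aux.measurable
  simp_rw [sigmoid_neg] at h
  rw [integral_sub (integrable_const 1) hσ, integral_const] at h
  simp only [measure_univ, probReal_univ, ENNReal.toReal_one, smul_eq_mul, one_mul] at h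
  linarith
lemma gauss_stein (v : ℝ≥0) :
    ∫ x, sigmoid x * x ∂(gaussianReal 0 v) = (v:ℝ) * ∫ x, sigmoid' x ∂(gaussianReal 0 v) := by
  by_cases hv : v = 0
  · subst hv
    rw [gaussianReal_zero_var]
    simp [integral_dirac]
  -- main case
  have hv' : (0:ℝ) < v := by positivity
  set b : ℝ := (2 * (v:ℝ))⁻¹ with hbdef
  have hb : (0:ℝ) < b := by positivity
  set c : ℝ := (√(2 * π * (v:ℝ)))⁻¹ with hcdef
  set E : ℝ → ℝ := fun x => rexp (-b * x^2) with hEdef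
  have hpdf : ∀ x, gaussianPDFReal 0 v x = c * E x := by
    intro x
    simp only [gaussianPDFReal, sub_zero, hEdef]
    congr 1
    rw [hbdef]
    field_simp
  have hEpos : ∀ x, 0 < E x := fun x => Real.exp_pos _
  -- derivative
  set F : ℝ → ℝ := fun x => sigmoid x * E x with hFdef
  set F' : ℝ → ℝ := fun x => sigmoid' x * E x - (sigmoid x / (v:ℝ)) * (x * E x) with hF'def
  have hE' : ∀ x, HasDerivAt E (E x * (-b * (2 * x))) x := by
    intro x
    have h1 : HasDerivAt (fun y : ℝ => -b * y^2) (-b * (2 * x)) x := by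
      have := (hasDerivAt_pow 2 x).const_mul (-b)
      simpa using this
    exact (Real.hasDerivAt_exp _).comp x h1
  have hF : ∀ x, HasDerivAt F (F' x) x := by
    intro x
    have h := (hasDerivAt_sigmoid x).mul (hE' x)
    have heq : sigmoid' x * E x + sigmoid x * (E x * (-b * (2 * x))) = F' x := by
      rw [hF'def, hbdef]
      field_simp
      ring
    rw [← heq]
    exact h
  -- integrability
  have hint1 : Integrable (fun x => sigmoid' x * E x) volume := by
    refine (integrable_exp_neg_mul_sq hb).bdd_mul (c := 1)
      continuous_sigmoid'.aestronglyMeasurable (ae_of_all _ fun x => ?_)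
    rw [Real.norm_eq_abs]; exact abs_sigmoid'_le x
  have hint2 : Integrable (fun x => (sigmoid x / (v:ℝ)) * (x * E x)) volume := by
    refine (integrable_mul_exp_neg_mul_sq hb).bdd_mul (c := (v:ℝ)⁻¹)
      ((continuous_sigmoid_aux.div_const _).aestronglyMeasurable) (ae_of_all _ fun x => ?_)
    rw [Real.norm_eq_abs, abs_div, abs_of_pos hv', div_eq_mul_inv]
    have := mul_le_mul_of_nonneg_right (abs_sigmoid_le x) (inv_nonneg.2 hv'.le)
    simpa using this
  have hF'int : Integrable F' volume := hint1.sub hint2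
  -- limits of F at infinity
  have hsq_top : Tendsto (fun x : ℝ => -b * x^2) atTop atBot :=
    (tendsto_pow_atTop two_ne_zero).const_mul_atTop_of_neg (by linarith)
  have hsq_bot : Tendsto (fun x : ℝ => -b * x^2) atBot atBot := by
    have h := ((tendsto_pow_atTop (α := ℝ) two_ne_zero).comp
      tendsto_neg_atBot_atTop).const_mul_atTop_of_neg (r := -b) (by linarith)
    refine h.congr fun x => ?_
    simp [neg_sq]
  have hEtop : Tendsto E atTop (nhds 0) := Real.tendsto_exp_atBot.comp hsq_top
  have hEbot : Tendsto E atBot (nhds 0) := Real.tendsto_exp_atBot.comp hsq_bot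
  have hFle : ∀ x, |F x| ≤ E x := by
    intro x
    rw [hFdef, abs_mul, abs_of_pos (hEpos x)]
    calc |sigmoid x| * E x ≤ 1 * E x :=
          mul_le_mul_of_nonneg_right (abs_sigmoid_le x) (hEpos x).le
      _ = E x := one_mul _
  have hFtop : Tendsto F atTop (nhds 0) := by
    refine squeeze_zero_norm (fun x => ?_) hEtop
    rw [Real.norm_eq_abs]; exact hFle x
  have hFbot : Tendsto F atBot (nhds 0) := by
    refine squeeze_zero_norm (fun x => ?_) hEbot
    rw [Real.norm_eq_abs]; exact hFle x
  -- FTC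
  have h1 : ∫ x in Set.Ioi (0:ℝ), F' x = 0 - F 0 :=
    MeasureTheory.integral_Ioi_of_hasDerivAt_of_tendsto' (fun x _ => hF x)
      hF'int.integrableOn hFtop
  have h2 : ∫ x in Set.Iic (0:ℝ), F' x = F 0 - 0 :=
    MeasureTheory.integral_Iic_of_hasDerivAt_of_tendsto' (fun x _ => hF x)
      hF'int.integrableOn hFbot
  have h0 : ∫ x, F' x = 0 := by
    rw [← intervalIntegral.integral_Iic_add_Ioi (μ := volume) (b := 0) hF'int.integrableOn hF'int.integrableOn,
      h1, h2]
    ring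
  have hkey : ∫ x, sigmoid x * x * E x = (v:ℝ) * ∫ x, sigmoid' x * E x := by
    have hsplit : ∫ x, F' x = (∫ x, sigmoid' x * E x) - ∫ x, (sigmoid x / (v:ℝ)) * (x * E x) := by
      rw [hF'def]
      exact integral_sub hint1 hint2
    have hre : ∀ x : ℝ, (sigmoid x / (v:ℝ)) * (x * E x) = (v:ℝ)⁻¹ * (sigmoid x * x * E x) := by
      intro x; field_simp
    simp_rw [hre] at hsplit
    rw [integral_const_mul] at hsplit
    rw [h0] at hsplit
    have : (v:ℝ)⁻¹ * ∫ x, sigmoid x * x * E x = ∫ x, sigmoid' x * E x := by linarith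
    rw [← this]
    field_simp
  -- put together
  rw [gauss_integral_rep hv, gauss_integral_rep hv]
  simp_rw [hpdf]
  calc ∫ x, c * E x * (sigmoid x * x) = c * ∫ x, sigmoid x * x * E x := by
        rw [show (fun x => c * E x * (sigmoid x * x)) = fun x => c * (sigmoid x * x * E x) from
          funext fun x => by ring, integral_const_mul]
    _ = c * ((v:ℝ) * ∫ x, sigmoid' x * E x) := by rw [hkey]
    _ = (v:ℝ) * ∫ x, c * E x * sigmoid' x := by
        rw [show (fun x => c * E x * sigmoid' x) = fun x => c * (sigmoid' x * E x) from
          funext fun x => by ring, integral_const_mul]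
        ring

end Aux

open Filter in
open Real hiding sigmoid sigmoid_pos sigmoid_le_one sigmoid_neg hasDerivAt_sigmoid in
theorem mse_deriv_initial_identity (γ₀ γ : NNReal) :
    ∫ w, (sigmoid w.1 - sigmoid w.2) * sigmoid' w.1 * (mu γ * w.2 - mu γ₀ * w.1)
        ∂((gaussianReal 0 (γ₀ ^ 2)).prod (gaussianReal 0 (γ ^ 2))) =
      -(γ : ℝ) ^ 2 * (mu γ) ^ 2 * mu γ₀ -
        mu γ₀ * ∫ x, (sigmoid x - 1/2) * sigmoid' x * x ∂(gaussianReal 0 (γ₀ ^ 2)) := by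
  set ν₀ := gaussianReal 0 (γ₀ ^ 2) with hν₀
  set ν := gaussianReal 0 (γ ^ 2) with hν
  have msig := continuous_sigmoid_aux.measurable
  have msig' := continuous_sigmoid'.measurable
  -- integrability facts
  have i1 : Integrable (fun x => sigmoid x * sigmoid' x) ν₀ :=
    gauss_integrable_of_bound _ _ (msig.mul msig') 1 fun x => by
      rw [abs_mul]
      calc |sigmoid x| * |sigmoid' x| ≤ 1 * 1 :=
        mul_le_mul (abs_sigmoid_le x) (abs_sigmoid'_le x) (abs_nonneg _) zero_le_one
      _ = 1 := one_mul 1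
  have i2 : Integrable (fun x => sigmoid x * sigmoid' x * x) ν₀ :=
    (gauss_integrable_id _).bdd_mul (c := 1) (msig.mul msig').aestronglyMeasurable
      (ae_of_all _ fun x => by
        rw [Real.norm_eq_abs, abs_mul]
        calc |sigmoid x| * |sigmoid' x| ≤ 1 * 1 :=
          mul_le_mul (abs_sigmoid_le x) (abs_sigmoid'_le x) (abs_nonneg _) zero_le_one
        _ = 1 := one_mul 1)
  have i3 : Integrable sigmoid' ν₀ :=
    gauss_integrable_of_bound _ _ msig' 1 abs_sigmoid'_le
  have i4 : Integrable sigmoid ν :=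
    gauss_integrable_of_bound _ _ msig 1 abs_sigmoid_le
  have i5 : Integrable (fun y => sigmoid y * y) ν :=
    (gauss_integrable_id _).bdd_mul (c := 1) msig.aestronglyMeasurable
      (ae_of_all _ fun x => by rw [Real.norm_eq_abs]; exact abs_sigmoid_le x)
  have i7 : Integrable (fun x => sigmoid' x * x) ν₀ :=
    (gauss_integrable_id _).bdd_mul (c := 1) msig'.aestronglyMeasurable
      (ae_of_all _ fun x => by rw [Real.norm_eq_abs]; exact abs_sigmoid'_le x)
  -- rewrite the integrand as a sum of product-type terms
  have hexp : (fun w : ℝ × ℝ =>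
      (sigmoid w.1 - sigmoid w.2) * sigmoid' w.1 * (mu γ * w.2 - mu γ₀ * w.1))
      = fun w : ℝ × ℝ =>
        (sigmoid w.1 * sigmoid' w.1) * (mu γ * w.2)
        + ((sigmoid w.1 * sigmoid' w.1 * w.1) * (-mu γ₀)
        + (sigmoid' w.1 * (-(mu γ) * (sigmoid w.2 * w.2))
        + (sigmoid' w.1 * w.1) * (mu γ₀ * sigmoid w.2))) := funext fun w => by ring
  rw [hexp]
  -- integrability of each product term
  have iT1 : Integrable (fun w : ℝ × ℝ =>
      (sigmoid w.1 * sigmoid' w.1) * (mu γ * w.2)) (ν₀.prod ν) :=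
    i1.mul_prod ((gauss_integrable_id _).const_mul (mu γ))
  have iT2 : Integrable (fun w : ℝ × ℝ =>
      (sigmoid w.1 * sigmoid' w.1 * w.1) * (-mu γ₀)) (ν₀.prod ν) :=
    i2.mul_prod (integrable_const _)
  have iT3 : Integrable (fun w : ℝ × ℝ =>
      sigmoid' w.1 * (-(mu γ) * (sigmoid w.2 * w.2))) (ν₀.prod ν) :=
    i3.mul_prod (i5.const_mul _)
  have iT4 : Integrable (fun w : ℝ × ℝ =>
      (sigmoid' w.1 * w.1) * (mu γ₀ * sigmoid w.2)) (ν₀.prod ν) :=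
    i7.mul_prod (i4.const_mul _)
  have iT34 : Integrable (fun w : ℝ × ℝ =>
      sigmoid' w.1 * (-(mu γ) * (sigmoid w.2 * w.2))
        + (sigmoid' w.1 * w.1) * (mu γ₀ * sigmoid w.2)) (ν₀.prod ν) := iT3.add iT4
  have iT234 : Integrable (fun w : ℝ × ℝ =>
      (sigmoid w.1 * sigmoid' w.1 * w.1) * (-mu γ₀)
        + (sigmoid' w.1 * (-(mu γ) * (sigmoid w.2 * w.2))
        + (sigmoid' w.1 * w.1) * (mu γ₀ * sigmoid w.2))) (ν₀.prod ν) := iT2.add iT34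
  rw [integral_add iT1 iT234, integral_add iT2 iT34, integral_add iT3 iT4,
    integral_prod_mul (fun x => sigmoid x * sigmoid' x) (fun y => mu γ * y),
    integral_prod_mul (fun x => sigmoid x * sigmoid' x * x) (fun _ => -mu γ₀),
    integral_prod_mul sigmoid' (fun y => -mu γ * (sigmoid y * y)),
    integral_prod_mul (fun x => sigmoid' x * x) (fun y => mu γ₀ * sigmoid y)]
  -- evaluate the one-dimensional integrals
  have h_y : ∫ y, mu γ * y ∂ν = 0 := by
    rw [integral_const_mul, hν, gauss_integral_id, mul_zero]
  have h_c : ∫ _ : ℝ, (-mu γ₀ : ℝ) ∂ν = -mu γ₀ := by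
    rw [integral_const]; simp [measure_univ]
  have h_mu : (∫ x, sigmoid' x ∂ν) = mu γ := rfl
  have h_mu0 : (∫ x, sigmoid' x ∂ν₀) = mu γ₀ := rfl
  have h_stein : ∫ y, -(mu γ) * (sigmoid y * y) ∂ν = -(mu γ) * ((γ:ℝ)^2 * mu γ) := by
    rw [integral_const_mul, hν, gauss_stein, ← hν, h_mu]
    push_cast
    ring
  have h_sig : ∫ y, mu γ₀ * sigmoid y ∂ν = mu γ₀ * (1/2) := by
    rw [integral_const_mul, hν, gauss_integral_sigmoid]
  rw [h_y, h_c, h_stein, h_sig, h_mu0]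
  -- rewrite the right-hand side integral
  have hR : ∫ x, (sigmoid x - 1/2) * sigmoid' x * x ∂ν₀
      = (∫ x, sigmoid x * sigmoid' x * x ∂ν₀) - (1/2) * ∫ x, sigmoid' x * x ∂ν₀ := by
    rw [show (fun x => (sigmoid x - 1/2) * sigmoid' x * x)
        = fun x => sigmoid x * sigmoid' x * x - (1/2) * (sigmoid' x * x) from
      funext fun x => by ring]
    rw [integral_sub i2 (i7.const_mul _), integral_const_mul]
  rw [hR]
  ring
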